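/- Let A ∈ Mat_{n×m}(R) and suppose the group G := A^T Z^n + Z^m ⊆ R^m has rank strictly less than n + m. Then the set {Aq mod 1 : q ∈ Z^m} ⊆ [0,1)^n is contained in a countable union of parallel (n−1)-dimensional affine hyperplanes of R^n, which are positively separated (there is d > 0 such that distinct hyperplanes in the family are at distance at least d). -/

import Mathlib

/-- The set of generators of the group Aᵀℤⁿ + ℤᵐ inside ℝᵐ. -/
def groupGens (n m : ℕ) (A : Matrix (Fin n) (Fin m) ℝ) : Set (Fin m → ℝ) :=
  {v | ∃ y : Fin n → ℤ, v = A.transpose.mulVec fun i => (y i : ℝ)} ∪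
    {v | ∀ j, ∃ z : ℤ, v j = (z : ℝ)}

theorem stmt10 (n m : ℕ) (A : Matrix (Fin n) (Fin m) ℝ)
    (hrank : Module.rank ℚ ↥(Submodule.span ℚ (groupGens n m A)) < (n + m : Cardinal)) :
    ∃ u : Fin n → ℝ, u ≠ 0 ∧ ∃ T : Set ℝ, T.Countable ∧ ∃ d > (0 : ℝ),
      (∀ t ∈ T, ∀ t' ∈ T, t ≠ t' →
        d ≤ |t - t'| / Real.sqrt (∑ i, (u i) ^ 2)) ∧
      ∀ q : Fin m → ℤ, ∃ t ∈ T,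
        (∑ i, u i * Int.fract (A.mulVec (fun j => (q j : ℝ)) i)) = t := by
  classical
  -- the family of n + m generators
  set f : Fin n ⊕ Fin m → (Fin m → ℝ) :=
    Sum.elim (fun i => A i) (fun j => Pi.single j 1) with hf
  have hmem : ∀ x, f x ∈ Submodule.span ℚ (groupGens n m A) := by
    intro x
    apply Submodule.subset_span
    cases x with
    | inl i =>
        left
        refine ⟨Pi.single i 1, ?_⟩
        funext j
        simp [hf, Matrix.mulVec, dotProduct, Pi.single_apply]
    | inr j =>
        right
        intro k
        by_cases h : k = j
        · exact ⟨1, by simp [hf, h, Pi.single_apply]⟩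
        · exact ⟨0, by simp [hf, Pi.single_apply, Ne.symm h, h]⟩
  -- f is not linearly independent over ℚ
  have hnli : ¬ LinearIndependent ℚ f := by
    intro hli
    set p := Submodule.span ℚ (groupGens n m A)
    have hli' : LinearIndependent ℚ (fun x => (⟨f x, hmem x⟩ : p)) := by
      apply LinearIndependent.of_comp p.subtype
      convert hli
      rfl
    have := hli'.cardinal_le_rank
    have hcard : Cardinal.mk (Fin n ⊕ Fin m) = (n + m : Cardinal) := by
      simp [Cardinal.mk_sum]
    rw [hcard] at this
    exact absurd hrank (not_lt.mpr this)
  obtain ⟨g, hsum, x₀, hx₀⟩ := Fintype.not_linearIndependent_iff.mp hnli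
  -- coordinatewise relation
  have hcoord : ∀ j, (∑ i, (g (Sum.inl i) : ℝ) * A i j) + (g (Sum.inr j) : ℝ) = 0 := by
    intro j
    have := congrFun hsum j
    rw [Fintype.sum_sum_type] at this
    simpa [hf, Finset.sum_apply, Rat.smul_def, Pi.single_apply] using this
  -- the "row" coefficients are not all zero
  have hc : ∃ i, g (Sum.inl i) ≠ 0 := by
    by_contra hall
    push_neg at hall
    cases x₀ with
    | inl i => exact hx₀ (hall i)
    | inr j =>
        have := hcoord j
        rw [Finset.sum_eq_zero (fun i _ => by rw [hall i]; simp)] at this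
        simp only [zero_add] at this
        exact hx₀ (by exact_mod_cast this)
  obtain ⟨i₀, hi₀⟩ := hc
  -- common denominator
  set N : ℕ := ∏ x, (g x).den with hN
  have hNpos : 0 < N := Finset.prod_pos (fun x _ => (g x).pos)
  have hint : ∀ x, ∃ z : ℤ, (g x) * N = z := by
    intro x
    obtain ⟨t, ht⟩ := Finset.dvd_prod_of_mem (fun x => (g x).den) (Finset.mem_univ x)
    refine ⟨(g x).num * t, ?_⟩
    rw [← hN] at ht
    push_cast [ht]
    rw [← mul_assoc, Rat.mul_den_eq_num]
  choose zf hzf using hint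
  -- the integer vector u
  set u : Fin n → ℝ := fun i => ((zf (Sum.inl i) : ℤ) : ℝ) with hu
  have huq : ∀ i, ((zf (Sum.inl i) : ℚ)) = g (Sum.inl i) * N := fun i => (hzf _).symm
  have hune : u ≠ 0 := by
    intro h
    have h1 : ((zf (Sum.inl i₀) : ℝ)) = 0 := congrFun h i₀
    have h2 : (zf (Sum.inl i₀) : ℤ) = 0 := by exact_mod_cast h1
    have : g (Sum.inl i₀) * N = 0 := by
      rw [hzf (Sum.inl i₀), h2]; simp
    rcases mul_eq_zero.mp this with h | h
    · exact hi₀ h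
    · exact absurd h (by positivity)
  -- key identity: uᵀA has integer entries
  have hAu : ∀ j, (∑ i, u i * A i j) = -((zf (Sum.inr j) : ℤ) : ℝ) := by
    intro j
    have h1 : ∀ i, u i = (g (Sum.inl i) : ℝ) * (N : ℝ) := by
      intro i
      show ((zf (Sum.inl i) : ℤ) : ℝ) = (g (Sum.inl i) : ℝ) * (N : ℝ)
      exact_mod_cast huq i
    have h2 : ((zf (Sum.inr j) : ℝ)) = (g (Sum.inr j) : ℝ) * (N : ℝ) := by
      exact_mod_cast (hzf (Sum.inr j)).symm
    calc (∑ i, u i * A i j) = (∑ i, (g (Sum.inl i) : ℝ) * A i j) * N := by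
            rw [Finset.sum_mul]
            exact Finset.sum_congr rfl (fun i _ => by rw [h1 i]; ring)
      _ = -((g (Sum.inr j) : ℝ)) * N := by
            have := hcoord j
            have : (∑ i, (g (Sum.inl i) : ℝ) * A i j) = -(g (Sum.inr j) : ℝ) := by
              linarith
            rw [this]
      _ = -((zf (Sum.inr j) : ℤ) : ℝ) := by rw [h2]; ring
  have hz0 : zf (Sum.inl i₀) ≠ 0 := by
    intro h
    have : g (Sum.inl i₀) * N = 0 := by rw [hzf (Sum.inl i₀), h]; simp
    rcases mul_eq_zero.mp this with h' | h'
    · exact hi₀ h'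
    · exact absurd h' (by positivity)
  have hui₀ : u i₀ ≠ 0 := by
    intro h
    have h' : ((zf (Sum.inl i₀) : ℤ) : ℝ) = 0 := h
    exact hz0 (by exact_mod_cast h')
  have hS : 0 < ∑ i, (u i) ^ 2 :=
    Finset.sum_pos' (fun i _ => sq_nonneg _) ⟨i₀, Finset.mem_univ _, by positivity⟩
  refine ⟨u, hune, Set.range (fun k : ℤ => (k : ℝ)), Set.countable_range _,
    1 / Real.sqrt (∑ i, (u i) ^ 2), ?_, ?_, ?_⟩
  · -- d > 0
    positivity
  · -- separation
    rintro t ⟨k, rfl⟩ t' ⟨k', rfl⟩ hne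
    have hkk : k ≠ k' := fun h => hne (by rw [h])
    have h1 : (1 : ℝ) ≤ |(k : ℝ) - (k' : ℝ)| := by
      have : (1 : ℤ) ≤ |k - k'| := Int.one_le_abs (sub_ne_zero.mpr hkk)
      exact_mod_cast this
    have hsq : 0 < Real.sqrt (∑ i, (u i) ^ 2) := Real.sqrt_pos.mpr hS
    rw [div_le_div_iff₀ hsq hsq, one_mul]
    nlinarith [hsq]
  · -- membership
    intro q
    set Av : Fin n → ℝ := A.mulVec (fun j => (q j : ℝ)) with hAv
    refine ⟨_, ⟨(∑ j, (-(zf (Sum.inr j))) * q j) - ∑ i, (zf (Sum.inl i)) * ⌊Av i⌋, rfl⟩, ?_⟩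
    have key : (∑ i, u i * Int.fract (Av i))
        = (∑ i, u i * Av i) - ∑ i, u i * (⌊Av i⌋ : ℝ) := by
      rw [← Finset.sum_sub_distrib]
      exact Finset.sum_congr rfl (fun i _ => by rw [Int.fract]; ring)
    rw [key]
    have h1 : (∑ i, u i * Av i) = ∑ j, (-((zf (Sum.inr j) : ℤ) : ℝ)) * (q j : ℝ) := by
      have : ∀ i, u i * Av i = ∑ j, u i * A i j * (q j : ℝ) := by
        intro i
        rw [hAv]
        simp [Matrix.mulVec, dotProduct, Finset.mul_sum, mul_assoc]
      rw [Finset.sum_congr rfl (fun i _ => this i), Finset.sum_comm]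
      refine Finset.sum_congr rfl (fun j _ => ?_)
      rw [← Finset.sum_mul, hAu j]
    rw [h1]
    push_cast
    ring
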